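/- Let $\nu$ be a $\sigma$-finite measure on $\mathbb{R}$, $h \geq 0$ measurable, and suppose $\Theta := \{\theta \in \mathbb{R} : \int e^{\theta x} h(x)\,\nu(dx) < \infty\}$ is open and nonempty; set $A(\theta) := \log \int e^{\theta x} h(x)\,\nu(dx)$ and let $f_\theta(x) := \exp(\theta x - A(\theta)) h(x)$ be the density with respect to $\nu$. Assume the family is minimal (the measure $h\,d\nu$ is not concentrated at a single point, so $A'' > 0$ on $\Theta$). Let $X_1,\ldots,X_m$ be i.i.d. with density $f_{\theta_0}$ for some $\theta_0 \in \Theta$, and define the log likelihood ratio statistic $\mathrm{logLR}_m(\theta_0) := \sup_{\theta \in \Theta}\big((\theta-\theta_0)\sum_{i=1}^m X_i - m(A(\theta)-A(\theta_0))\big)$. Then for all $x > 0$: $\Pr_{\theta_0}\big(\sqrt{2\,\mathrm{logLR}_m(\theta_0)} > x\big) \leq 2\exp(-x^2/2)$. -/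

import Mathlib

open MeasureTheory ProbabilityTheory Finset
open scoped NNReal ENNReal

/-- Sub-Gaussian tail bound for the square root of the log
likelihood ratio statistic in a regular minimal one-dimensional natural
exponential family: for i.i.d. `X_1, …, X_m ~ f_{θ₀}` and
`logLR_m(θ₀) = sup_{θ ∈ Θ} ((θ-θ₀) ∑ X_i - m (A(θ)-A(θ₀)))`, one has
`P(√(2 logLR_m(θ₀)) > x) ≤ 2 exp(-x²/2)` for every `x > 0`. -/
theorem sqrt_logLR_subgaussian
    (ν : Measure ℝ) [SigmaFinite ν]
    (h : ℝ → ℝ) (hmeas : Measurable h) (hpos : ∀ x, 0 ≤ h x)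
    (Θ : Set ℝ)
    (hΘ : Θ = {θ : ℝ | Integrable (fun x => Real.exp (θ * x) * h x) ν})
    (hΘopen : IsOpen Θ) (hΘne : Θ.Nonempty)
    (A : ℝ → ℝ)
    (hA : ∀ θ ∈ Θ, A θ = Real.log (∫ x, Real.exp (θ * x) * h x ∂ν))
    -- minimality: the family is not degenerate, so `A'' > 0` on `Θ`
    (hmin : ∀ θ ∈ Θ, 0 < iteratedDeriv 2 A θ)
    (θ₀ : ℝ) (hθ₀ : θ₀ ∈ Θ)
    {Ω : Type*} [MeasureSpace Ω] [IsProbabilityMeasure (ℙ : Measure Ω)]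
    (m : ℕ) (hm : 1 ≤ m)
    (X : Fin m → Ω → ℝ) (hXmeas : ∀ i, Measurable (X i))
    (hXindep : iIndepFun X ℙ)
    (hXlaw : ∀ i, Measure.map (X i) ℙ =
      ν.withDensity (fun x => ENNReal.ofReal (Real.exp (θ₀ * x - A θ₀) * h x)))
    (x : ℝ) (hx : 0 < x) :
    ℙ {ω | Real.sqrt (2 * ⨆ θ ∈ Θ,
        ((θ - θ₀) * ∑ i, X i ω - (m : ℝ) * (A θ - A θ₀))) > x}
      ≤ ENNReal.ofReal (2 * Real.exp (-x ^ 2 / 2)) := by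
  classical
  set S : Ω → ℝ := fun ω => ∑ i, X i ω with hSdef
  have hSmeas : Measurable S := Finset.measurable_sum _ fun i _ => hXmeas i
  set t : ℝ := x ^ 2 / 2 with htdef
  have ht : 0 < t := by positivity
  have i0 : Fin m := ⟨0, hm⟩
  have hΘint : ∀ θ ∈ Θ, Integrable (fun y => Real.exp (θ * y) * h y) ν := by
    intro θ hθ; rw [hΘ] at hθ; exact hθ
  haveI hmap : IsProbabilityMeasure (Measure.map (X i0) ℙ) :=
    Measure.isProbabilityMeasure_map (hXmeas i0).aemeasurable
  have h1 : ∫⁻ y, ENNReal.ofReal (Real.exp (θ₀ * y - A θ₀) * h y) ∂ν = 1 := by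
    have h2 := measure_univ (μ := Measure.map (X i0) ℙ)
    rw [hXlaw i0, withDensity_apply _ MeasurableSet.univ, setLIntegral_univ] at h2
    exact h2
  have hI0 : ∀ θ ∈ Θ, 0 < ∫ y, Real.exp (θ * y) * h y ∂ν := by
    intro θ hθ
    rcases (integral_nonneg (μ := ν) (f := fun y => Real.exp (θ * y) * h y) fun y => mul_nonneg (Real.exp_pos _).le (hpos y)).lt_or_eq
      with hlt | heq
    · exact hlt
    · exfalso
      have hz : (fun y => Real.exp (θ * y) * h y) =ᵐ[ν] 0 :=
        (integral_eq_zero_iff_of_nonneg (fun y => mul_nonneg (Real.exp_pos _).le (hpos y))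
          (hΘint θ hθ)).1 heq.symm
      have hz' : (fun y => ENNReal.ofReal (Real.exp (θ₀ * y - A θ₀) * h y)) =ᵐ[ν] 0 := by
        filter_upwards [hz] with y hy
        have hy' : Real.exp (θ * y) * h y = 0 := hy
        have hhy : h y = 0 := by
          rcases mul_eq_zero.1 hy' with h' | h'
          · exact absurd h' (Real.exp_ne_zero _)
          · exact h'
        simp [hhy]
      rw [lintegral_congr_ae hz'] at h1
      simp at h1
  have hexpA : ∀ θ ∈ Θ, Real.exp (A θ) = ∫ y, Real.exp (θ * y) * h y ∂ν := by
    intro θ hθ; rw [hA θ hθ, Real.exp_log (hI0 θ hθ)]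
  -- the density as an `ℝ≥0`-valued function
  have hDmeas : Measurable fun y : ℝ => (Real.exp (θ₀ * y - A θ₀) * h y).toNNReal := by
    fun_prop
  have hDcast : (fun y : ℝ => ENNReal.ofReal (Real.exp (θ₀ * y - A θ₀) * h y))
      = fun y : ℝ => ((Real.exp (θ₀ * y - A θ₀) * h y).toNNReal : ℝ≥0∞) := rfl
  have hkey : ∀ θ : ℝ, ∀ y : ℝ,
      ((Real.exp (θ₀ * y - A θ₀) * h y).toNNReal : ℝ) • Real.exp ((θ - θ₀) * y)
        = Real.exp (-A θ₀) * (Real.exp (θ * y) * h y) := by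
    intro θ y
    rw [smul_eq_mul, Real.coe_toNNReal _ (mul_nonneg (Real.exp_pos _).le (hpos y)),
      mul_right_comm, ← Real.exp_add,
      show θ₀ * y - A θ₀ + (θ - θ₀) * y = -A θ₀ + θ * y by ring, Real.exp_add]
    ring
  have hXint : ∀ θ ∈ Θ, ∀ i, Integrable (fun ω => Real.exp ((θ - θ₀) * X i ω)) ℙ := by
    intro θ hθ i
    have hg : Measurable fun y : ℝ => Real.exp ((θ - θ₀) * y) := by fun_prop
    have h2 : Integrable (fun y : ℝ => Real.exp ((θ - θ₀) * y)) (Measure.map (X i) ℙ) := by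
      rw [hXlaw i, hDcast, integrable_withDensity_iff_integrable_smul hDmeas]
      have : (fun y : ℝ => ((Real.exp (θ₀ * y - A θ₀) * h y).toNNReal : ℝ≥0)
            • Real.exp ((θ - θ₀) * y))
          = fun y => Real.exp (-A θ₀) * (Real.exp (θ * y) * h y) := by
        funext y; exact hkey θ y
      rw [this]
      exact (hΘint θ hθ).const_mul _
    exact (integrable_map_measure hg.aestronglyMeasurable (hXmeas i).aemeasurable).1 h2
  have hXmgf : ∀ θ ∈ Θ, ∀ i, mgf (X i) ℙ (θ - θ₀) = Real.exp (A θ - A θ₀) := by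
    intro θ hθ i
    have hg : Measurable fun y : ℝ => Real.exp ((θ - θ₀) * y) := by fun_prop
    have h2 : mgf (X i) ℙ (θ - θ₀)
        = ∫ y, Real.exp ((θ - θ₀) * y) ∂(Measure.map (X i) ℙ) := by
      rw [integral_map (hXmeas i).aemeasurable
        (hg.aestronglyMeasurable.mono_ac (Measure.AbsolutelyContinuous.refl _))]
      rfl
    rw [h2, hXlaw i, hDcast, integral_withDensity_eq_integral_smul hDmeas]
    have : (fun y : ℝ => ((Real.exp (θ₀ * y - A θ₀) * h y).toNNReal : ℝ≥0)
          • Real.exp ((θ - θ₀) * y))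
        = fun y => Real.exp (-A θ₀) * (Real.exp (θ * y) * h y) := by
      funext y; exact hkey θ y
    rw [this, integral_const_mul, ← hexpA θ hθ, ← Real.exp_add]
    ring_nf
  have hSfun : S = ∑ i, X i := by
    funext ω; simp [hSdef, Finset.sum_apply]
  have hSint : ∀ θ ∈ Θ, Integrable (fun ω => Real.exp ((θ - θ₀) * S ω)) ℙ := by
    intro θ hθ
    have := hXindep.integrable_exp_mul_sum hXmeas (s := Finset.univ)
      (fun i _ => hXint θ hθ i)
    rw [hSfun]; exact this
  have hSmgf : ∀ θ ∈ Θ, mgf S ℙ (θ - θ₀) = Real.exp ((m : ℝ) * (A θ - A θ₀)) := by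
    intro θ hθ
    rw [hSfun, hXindep.mgf_sum hXmeas]
    have : ∀ i : Fin m, mgf (X i) ℙ (θ - θ₀) = Real.exp (A θ - A θ₀) := hXmgf θ hθ
    simp only [this, Finset.prod_const, Finset.card_univ, Fintype.card_fin]
    rw [← Real.exp_nat_mul]
  -- Chernoff bounds
  have cherU : ∀ θ ∈ Θ, θ₀ < θ → ∀ b : ℝ,
      ℙ {ω | b ≤ S ω} ≤ ENNReal.ofReal
        (Real.exp ((m : ℝ) * (A θ - A θ₀) - (θ - θ₀) * b)) := by
    intro θ hθ hlt b
    have hρ : (0:ℝ) ≤ θ - θ₀ := by linarith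
    have hcb := measure_ge_le_exp_mul_mgf (μ := ℙ) (X := S) (t := θ - θ₀) b hρ (hSint θ hθ)
    rw [hSmgf θ hθ, ← Real.exp_add] at hcb
    rw [← ENNReal.ofReal_toReal (measure_ne_top ℙ _)]
    refine ENNReal.ofReal_le_ofReal (hcb.trans (le_of_eq ?_))
    congr 1; ring
  have cherL : ∀ θ ∈ Θ, θ < θ₀ → ∀ b : ℝ,
      ℙ {ω | S ω ≤ b} ≤ ENNReal.ofReal
        (Real.exp ((m : ℝ) * (A θ - A θ₀) - (θ - θ₀) * b)) := by
    intro θ hθ hlt b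
    have hρ : (0:ℝ) ≤ θ₀ - θ := by linarith
    have hint : Integrable (fun ω => Real.exp ((θ₀ - θ) * (-S) ω)) ℙ := by
      have := hSint θ hθ
      simpa only [Pi.neg_apply, mul_neg, neg_mul, neg_sub,
        show ∀ ω, (θ₀ - θ) * (-S ω) = (θ - θ₀) * S ω from fun ω => by ring] using this
    have hcb := measure_ge_le_exp_mul_mgf (μ := ℙ) (X := -S) (t := θ₀ - θ) (-b) hρ hint
    have hmg : mgf (-S) ℙ (θ₀ - θ) = mgf S ℙ (θ - θ₀) := by
      rw [mgf_neg]; congr 1; ring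
    rw [hmg, hSmgf θ hθ, ← Real.exp_add] at hcb
    have hset : {ω | S ω ≤ b} = {ω | -b ≤ (-S) ω} := by
      ext ω; simp [neg_le_neg_iff, neg_le]
    rw [hset, ← ENNReal.ofReal_toReal (measure_ne_top ℙ _)]
    refine ENNReal.ofReal_le_ofReal (hcb.trans (le_of_eq ?_))
    congr 1; ring
  -- union bounds over rational thresholds
  have keyP : ℙ {ω | ∃ θ, θ ∈ Θ ∧ θ₀ < θ ∧
        t + (m : ℝ) * (A θ - A θ₀) < (θ - θ₀) * S ω}
      ≤ ENNReal.ofReal (Real.exp (-t)) := by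
    set P : ℚ → Prop := fun q =>
      ∃ θ, θ ∈ Θ ∧ θ₀ < θ ∧ t + (m : ℝ) * (A θ - A θ₀) < (θ - θ₀) * (q : ℝ) with hP
    have hsub : {ω | ∃ θ, θ ∈ Θ ∧ θ₀ < θ ∧
          t + (m : ℝ) * (A θ - A θ₀) < (θ - θ₀) * S ω}
        ⊆ ⋃ q : {q : ℚ // P q}, {ω | ((q : ℚ) : ℝ) ≤ S ω} := by
      rintro ω ⟨θ, hθ, hlt, hg⟩
      have hρ : (0:ℝ) < θ - θ₀ := by linarith
      have hc : (t + (m : ℝ) * (A θ - A θ₀)) / (θ - θ₀) < S ω :=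
        (div_lt_iff₀ hρ).2 (by linarith [hg])
      obtain ⟨q, hq1, hq2⟩ := exists_rat_btwn hc
      refine Set.mem_iUnion.2 ⟨⟨q, θ, hθ, hlt, ?_⟩, hq2.le⟩
      have := (div_lt_iff₀ hρ).1 hq1
      linarith
    refine le_trans (measure_mono hsub) ?_
    have hdir : Directed (· ⊆ ·)
        (fun q : {q : ℚ // P q} => {ω | ((q : ℚ) : ℝ) ≤ S ω}) := by
      intro q1 q2
      rcases le_total (q1 : ℚ) (q2 : ℚ) with hle | hle
      · exact ⟨q1, subset_rfl, fun ω hω =>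
          le_trans (show ((q1 : ℚ) : ℝ) ≤ ((q2 : ℚ) : ℝ) by exact_mod_cast hle) hω⟩
      · exact ⟨q2, fun ω hω =>
          le_trans (show ((q2 : ℚ) : ℝ) ≤ ((q1 : ℚ) : ℝ) by exact_mod_cast hle) hω, subset_rfl⟩
    rw [hdir.measure_iUnion]
    refine iSup_le fun q => ?_
    obtain ⟨θ, hθ, hlt, hq⟩ := q.2
    refine le_trans (cherU θ hθ hlt ((q : ℚ) : ℝ)) (ENNReal.ofReal_le_ofReal
      (Real.exp_le_exp.2 ?_))
    linarith
  have keyM : ℙ {ω | ∃ θ, θ ∈ Θ ∧ θ < θ₀ ∧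
        t + (m : ℝ) * (A θ - A θ₀) < (θ - θ₀) * S ω}
      ≤ ENNReal.ofReal (Real.exp (-t)) := by
    set P : ℚ → Prop := fun q =>
      ∃ θ, θ ∈ Θ ∧ θ < θ₀ ∧ t + (m : ℝ) * (A θ - A θ₀) < (θ - θ₀) * (q : ℝ) with hP
    have hsub : {ω | ∃ θ, θ ∈ Θ ∧ θ < θ₀ ∧
          t + (m : ℝ) * (A θ - A θ₀) < (θ - θ₀) * S ω}
        ⊆ ⋃ q : {q : ℚ // P q}, {ω | S ω ≤ ((q : ℚ) : ℝ)} := by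
      rintro ω ⟨θ, hθ, hlt, hg⟩
      have hρ : θ - θ₀ < 0 := by linarith
      have hc : S ω < (t + (m : ℝ) * (A θ - A θ₀)) / (θ - θ₀) :=
        (lt_div_iff_of_neg hρ).2 (by linarith [hg])
      obtain ⟨q, hq1, hq2⟩ := exists_rat_btwn hc
      refine Set.mem_iUnion.2 ⟨⟨q, θ, hθ, hlt, ?_⟩, hq1.le⟩
      have := (lt_div_iff_of_neg hρ).1 hq2
      linarith
    refine le_trans (measure_mono hsub) ?_
    have hdir : Directed (· ⊆ ·)
        (fun q : {q : ℚ // P q} => {ω | S ω ≤ ((q : ℚ) : ℝ)}) := by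
      intro q1 q2
      rcases le_total (q1 : ℚ) (q2 : ℚ) with hle | hle
      · exact ⟨q2, fun ω hω =>
          le_trans hω (show ((q1 : ℚ) : ℝ) ≤ ((q2 : ℚ) : ℝ) by exact_mod_cast hle), subset_rfl⟩
      · exact ⟨q1, subset_rfl, fun ω hω =>
          le_trans hω (show ((q2 : ℚ) : ℝ) ≤ ((q1 : ℚ) : ℝ) by exact_mod_cast hle)⟩
    rw [hdir.measure_iUnion]
    refine iSup_le fun q => ?_
    obtain ⟨θ, hθ, hlt, hq⟩ := q.2
    refine le_trans (cherL θ hθ hlt ((q : ℚ) : ℝ)) (ENNReal.ofReal_le_ofReal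
      (Real.exp_le_exp.2 ?_))
    linarith
  -- main event inclusion
  have hEsub : {ω | Real.sqrt (2 * ⨆ θ ∈ Θ,
        ((θ - θ₀) * ∑ i, X i ω - (m : ℝ) * (A θ - A θ₀))) > x}
      ⊆ {ω | ∃ θ, θ ∈ Θ ∧ θ₀ < θ ∧
            t + (m : ℝ) * (A θ - A θ₀) < (θ - θ₀) * S ω}
        ∪ {ω | ∃ θ, θ ∈ Θ ∧ θ < θ₀ ∧
            t + (m : ℝ) * (A θ - A θ₀) < (θ - θ₀) * S ω} := by
    intro ω hω
    simp only [Set.mem_setOf_eq, gt_iff_lt] at hω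
    have hx2 : x ^ 2 < 2 * ⨆ θ ∈ Θ,
        ((θ - θ₀) * ∑ i, X i ω - (m : ℝ) * (A θ - A θ₀)) := (Real.lt_sqrt hx.le).1 hω
    have hL : t < ⨆ θ ∈ Θ, ((θ - θ₀) * S ω - (m : ℝ) * (A θ - A θ₀)) := by
      rw [htdef]; linarith
    obtain ⟨θ, hθt⟩ := exists_lt_of_lt_ciSup hL
    by_cases hθ : θ ∈ Θ
    · haveI : Nonempty (θ ∈ Θ) := ⟨hθ⟩
      rw [ciSup_const] at hθt
      rcases lt_trichotomy θ₀ θ with hlt | heq | hgt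
      · exact Or.inl ⟨θ, hθ, hlt, by linarith⟩
      · exfalso; rw [← heq] at hθt; simp at hθt; linarith
      · exact Or.inr ⟨θ, hθ, hgt, by linarith⟩
    · exfalso
      haveI : IsEmpty (θ ∈ Θ) := ⟨hθ⟩
      rw [Real.iSup_of_isEmpty] at hθt; linarith
  calc ℙ {ω | Real.sqrt (2 * ⨆ θ ∈ Θ,
        ((θ - θ₀) * ∑ i, X i ω - (m : ℝ) * (A θ - A θ₀))) > x}
      ≤ ℙ ({ω | ∃ θ, θ ∈ Θ ∧ θ₀ < θ ∧
            t + (m : ℝ) * (A θ - A θ₀) < (θ - θ₀) * S ω}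
        ∪ {ω | ∃ θ, θ ∈ Θ ∧ θ < θ₀ ∧
            t + (m : ℝ) * (A θ - A θ₀) < (θ - θ₀) * S ω}) := measure_mono hEsub
    _ ≤ _ + _ := measure_union_le _ _
    _ ≤ ENNReal.ofReal (Real.exp (-t)) + ENNReal.ofReal (Real.exp (-t)) :=
        add_le_add keyP keyM
    _ = ENNReal.ofReal (2 * Real.exp (-x ^ 2 / 2)) := by
        rw [← ENNReal.ofReal_add (Real.exp_pos _).le (Real.exp_pos _).le]
        congr 1
        rw [htdef]
        ring_nf
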